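/- Let V be a finite-dimensional complex vector space and (ρ_k) a sequence of invertible linear maps V → V. Then there exists a subsequence (ρ_{k_j}) such that for every nonzero x ∈ V, the sequence of points [ρ_{k_j}(x)] in the projective space ℙ(V) converges. -/

import Mathlib

open Filter Topology

set_option maxHeartbeats 1000000
set_option synthInstance.maxHeartbeats 400000

lemma aux_sub {V : Type*} [NormedAddCommGroup V] [NormedSpace ℂ V]
    [FiniteDimensional ℂ V] :
    ∀ n : ℕ, ∀ W : Submodule ℂ V, Module.finrank ℂ W ≤ n → ∀ ρ : ℕ → V ≃ₗ[ℂ] V,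
    ∃ φ : ℕ → ℕ, StrictMono φ ∧
      ∀ x ∈ W, x ≠ 0 → ∃ y : V, y ≠ 0 ∧ ∃ c : ℕ → ℂ, (∀ j, c j ≠ 0) ∧
        Tendsto (fun j => c j • (ρ (φ j) x)) atTop (𝓝 y) := by
  intro n
  induction n with
  | zero =>
    intro W hW ρ
    refine ⟨id, strictMono_id, fun x hxW hx => absurd ?_ hx⟩
    have : W = ⊥ := Submodule.finrank_eq_zero.mp (Nat.le_zero.mp hW)
    simpa [this] using hxW
  | succ n ih =>
    intro W hW ρ
    rcases Nat.lt_or_ge (Module.finrank ℂ W) (n+1) with h | h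
    · exact ih W (Nat.lt_succ_iff.mp h) ρ
    have hWrank : Module.finrank ℂ W = n + 1 := le_antisymm hW h
    have hWne : W ≠ ⊥ := by
      intro hb
      rw [hb, finrank_bot] at hWrank
      omega
    obtain ⟨x₀, hx₀W, hx₀⟩ := Submodule.exists_mem_ne_zero_of_ne_bot hWne
    -- the maps W →L V
    set M : ℕ → (W →L[ℂ] V) :=
      fun k => LinearMap.toContinuousLinearMap ((ρ k).toLinearMap ∘ₗ W.subtype) with hM
    have hMne0 : ∀ k, M k ≠ 0 := by
      intro k hk
      have : M k ⟨x₀, hx₀W⟩ = 0 := by rw [hk]; rfl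
      have : ρ k x₀ = 0 := by simpa [hM] using this
      exact hx₀ ((ρ k).map_eq_zero_iff.mp this)
    have hMne : ∀ k, ‖M k‖ ≠ 0 := fun k h => hMne0 k ((ContinuousLinearMap.opNorm_zero_iff (M k)).mp h)
    set N : ℕ → (W →L[ℂ] V) := fun k => ((‖M k‖ : ℂ))⁻¹ • M k with hN
    have hNsphere : ∀ k, N k ∈ Metric.sphere (0 : W →L[ℂ] V) 1 := by
      intro k
      have hr : (0:ℝ) < ‖M k‖ := lt_of_le_of_ne (ContinuousLinearMap.opNorm_nonneg _) (Ne.symm (hMne k))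
      have hrc : ((‖M k‖ : ℂ)) ≠ 0 := by
        exact_mod_cast hMne k
      have hle : ‖N k‖ ≤ 1 := by
        calc ‖N k‖ ≤ ‖((‖M k‖ : ℂ))⁻¹‖ * ‖M k‖ := ContinuousLinearMap.opNorm_smul_le _ _
          _ = 1 := by
            rw [norm_inv, Complex.norm_real, Real.norm_eq_abs, abs_of_pos hr]
            exact inv_mul_cancel₀ (hMne k)
      have hge : (1:ℝ) ≤ ‖N k‖ := by
        have hMeq : M k = ((‖M k‖ : ℂ)) • N k := by
          rw [hN, smul_smul, mul_inv_cancel₀ hrc, one_smul]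
        have h2 : ‖M k‖ ≤ ‖((‖M k‖ : ℂ))‖ * ‖N k‖ := by
          calc ‖M k‖ = ‖((‖M k‖ : ℂ)) • N k‖ := by rw [← hMeq]
            _ ≤ _ := ContinuousLinearMap.opNorm_smul_le _ _
        rw [Complex.norm_real, Real.norm_eq_abs, abs_of_pos hr] at h2
        exact (le_mul_iff_one_le_right hr).mp h2
      exact mem_sphere_zero_iff_norm (E := W →L[ℂ] V) |>.mpr (le_antisymm hle hge)
    haveI : ProperSpace (W →L[ℂ] V) := FiniteDimensional.proper ℂ (W →L[ℂ] V)
    obtain ⟨A, hAs, ψ, hψ, hψt⟩ :=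
      (isCompact_sphere (0 : W →L[ℂ] V) 1).tendsto_subseq hNsphere
    have hA : A ≠ 0 := by
      intro h
      rw [h] at hAs
      simp at hAs
    set K : Submodule ℂ V := (LinearMap.ker (A : W →ₗ[ℂ] V)).map W.subtype with hK
    have hKW : K ≤ W := by
      rintro x ⟨y, _, rfl⟩
      exact y.2
    have hKrank : Module.finrank ℂ K ≤ n := by
      have h1 : Module.finrank ℂ K = Module.finrank ℂ (LinearMap.ker (A : W →ₗ[ℂ] V)) :=
        Submodule.finrank_map_subtype_eq W _
      have h2 : LinearMap.ker (A : W →ₗ[ℂ] V) ≠ ⊤ := by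
        intro h
        apply hA
        ext w
        exact LinearMap.mem_ker.mp (h ▸ Submodule.mem_top : w ∈ LinearMap.ker (A : W →ₗ[ℂ] V))
      have h3 := Submodule.finrank_lt (s := LinearMap.ker (A : W →ₗ[ℂ] V)) h2
      omega
    obtain ⟨φ', hφ', hconv⟩ := ih K hKrank (fun k => ρ (ψ k))
    refine ⟨ψ ∘ φ', hψ.comp hφ', fun x hxW hx => ?_⟩
    by_cases hxK : x ∈ K
    · exact hconv x hxK hx
    · set xw : W := ⟨x, hxW⟩ with hxw
      have hAx : A xw ≠ 0 := by
        intro h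
        exact hxK ⟨xw, LinearMap.mem_ker.mpr h, rfl⟩
      refine ⟨A xw, hAx, fun j => ((‖M (ψ (φ' j))‖ : ℂ))⁻¹, fun j => ?_, ?_⟩
      · simpa using hMne (ψ (φ' j))
      · have h1 : Tendsto (fun k => N (ψ k) xw) atTop (𝓝 (A xw)) :=
          ((ContinuousLinearMap.apply ℂ V xw).continuous.tendsto A).comp hψt
        have h2 : Tendsto (fun j => N (ψ (φ' j)) xw) atTop (𝓝 (A xw)) :=
          h1.comp hφ'.tendsto_atTop
        refine h2.congr fun j => ?_
        simp [hN, hM]; rfl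

/-- Given a sequence of invertible linear maps of a finite-dimensional complex vector
space, there is a subsequence along which the images `[ρ_{k_j}(x)]` converge in
projective space for every nonzero `x`; convergence in `ℙ(V)` is expressed by the
existence of nonzero scalars `c_j` and a nonzero limit `y` with `c_j • ρ_{k_j}(x) → y`. -/
theorem stmt_2 {V : Type*} [NormedAddCommGroup V] [NormedSpace ℂ V]
    [FiniteDimensional ℂ V] (ρ : ℕ → V ≃ₗ[ℂ] V) :
    ∃ φ : ℕ → ℕ, StrictMono φ ∧
      ∀ x : V, x ≠ 0 → ∃ y : V, y ≠ 0 ∧ ∃ c : ℕ → ℂ, (∀ j, c j ≠ 0) ∧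
        Tendsto (fun j => c j • (ρ (φ j) x)) atTop (𝓝 y) := by
  obtain ⟨φ, hφ, hconv⟩ := aux_sub (Module.finrank ℂ (⊤ : Submodule ℂ V)) ⊤ le_rfl ρ
  exact ⟨φ, hφ, fun x hx => hconv x Submodule.mem_top hx⟩
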